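/- Let X be a well-ordered alphabet and let u be a nonempty word on X. Then the following are equivalent: (1) for every factorization u = vw with v, w nonempty, u is pseudo-lexicographically greater than wv; (2) for every factorization u = vw with v, w nonempty, u is pseudo-lexicographically greater than w; (3) for every factorization u = vw with v, w nonempty, v is pseudo-lexicographically greater than w. -/
import Mathlib


variable {X : Type*} [LinearOrder X] [WellFoundedLT X]

/-- The partial order `≺` on words: `u ≺ v` iff `u = r ++ x :: s`, `v = r ++ y :: t`
with letters `x < y`. -/
def Prec (u v : List X) : Prop :=
  ∃ (r s t : List X) (x y : X), x < y ∧ u = r ++ x :: s ∧ v = r ++ y :: t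

/-- The pseudo-lexicographic order: `u <_lex v` iff `v` is a proper prefix of `u` or `u ≺ v`. -/
def PLex (u v : List X) : Prop :=
  (v <+: u ∧ v ≠ u) ∨ Prec u v

/-- `u ≤_lex v`. -/
def PLexLe (u v : List X) : Prop := u = v ∨ PLex u v

/-- A Lyndon word (Kharchenko convention): a nonempty word strictly greater in the
pseudo-lexicographic order than each of its proper nonempty suffixes. -/
def IsLyndon (u : List X) : Prop :=
  u ≠ [] ∧ ∀ v w : List X, u = v ++ w → v ≠ [] → w ≠ [] → PLex w u

theorem not_plex_nil_left (v : List X) : ¬ PLex [] v := by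
  rintro (⟨h, hne⟩ | ⟨r, s, t, x, y, hxy, h1, h2⟩)
  · exact hne (List.prefix_nil.mp h)
  · simp at h1

theorem plex_nil_right {u : List X} (h : u ≠ []) : PLex u [] :=
  Or.inl ⟨List.nil_prefix, fun he => h he.symm⟩

theorem plex_of_prefix {a b : List X} (h : b <+: a) (hne : b ≠ a) : PLex a b :=
  Or.inl ⟨h, hne⟩

theorem plex_cons_cons {x y : X} {s t : List X} :
    PLex (x :: s) (y :: t) ↔ x < y ∨ (x = y ∧ PLex s t) := by
  constructor
  · rintro (⟨h, hne⟩ | ⟨r, s', t', a, b, hab, h1, h2⟩)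
    · rw [List.cons_prefix_cons] at h
      obtain ⟨rfl, hpf⟩ := h
      refine Or.inr ⟨rfl, Or.inl ⟨hpf, ?_⟩⟩
      intro he; exact hne (by rw [he])
    · match r with
      | [] =>
        simp only [List.nil_append, List.cons.injEq] at h1 h2
        exact Or.inl (h1.1 ▸ h2.1 ▸ hab)
      | c :: r' =>
        simp only [List.cons_append, List.cons.injEq] at h1 h2
        refine Or.inr ⟨h1.1.trans h2.1.symm, Or.inr ⟨r', s', t', a, b, hab, h1.2, h2.2⟩⟩
  · rintro (h | ⟨rfl, (⟨hpf, hne⟩ | ⟨r, s', t', a, b, hab, h1, h2⟩)⟩)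
    · exact Or.inr ⟨[], s, t, x, y, h, rfl, rfl⟩
    · refine Or.inl ⟨List.cons_prefix_cons.mpr ⟨rfl, hpf⟩, ?_⟩
      intro he; exact hne (by injection he)
    · exact Or.inr ⟨x :: r, s', t', a, b, hab, by rw [h1]; rfl, by rw [h2]; rfl⟩

theorem plex_irrefl (u : List X) : ¬ PLex u u := by
  rintro (⟨_, hne⟩ | ⟨r, s, t, x, y, hxy, h1, h2⟩)
  · exact hne rfl
  · rw [h1] at h2
    have h3 : x :: s = y :: t := List.append_cancel_left h2
    have : x = y := by injection h3
    exact absurd hxy (this ▸ lt_irrefl x)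

theorem plex_trans (a : List X) : ∀ b c : List X, PLex a b → PLex b c → PLex a c := by
  induction a with
  | nil => intro b c h _; exact absurd h (not_plex_nil_left b)
  | cons x s ih =>
    intro b c h1 h2
    match b with
    | [] => exact absurd h2 (not_plex_nil_left c)
    | y :: t =>
      match c with
      | [] => exact plex_nil_right (by simp)
      | z :: r =>
        rw [plex_cons_cons] at h1 h2 ⊢
        rcases h1 with h1 | ⟨rfl, h1⟩
        · rcases h2 with h2 | ⟨rfl, h2⟩
          · exact Or.inl (h1.trans h2)
          · exact Or.inl h1
        · rcases h2 with h2 | ⟨rfl, h2⟩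
          · exact Or.inl h2
          · exact Or.inr ⟨rfl, ih t r h1 h2⟩

theorem plex_asymm {a b : List X} (h1 : PLex a b) (h2 : PLex b a) : False :=
  plex_irrefl a (plex_trans a b a h1 h2)

theorem plex_trichotomy (a : List X) : ∀ b : List X, PLex a b ∨ a = b ∨ PLex b a := by
  induction a with
  | nil =>
    intro b
    match b with
    | [] => exact Or.inr (Or.inl rfl)
    | y :: t => exact Or.inr (Or.inr (plex_nil_right (by simp)))
  | cons x s ih =>
    intro b
    match b with
    | [] => exact Or.inl (plex_nil_right (by simp))
    | y :: t =>
      rcases lt_trichotomy x y with h | rfl | h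
      · exact Or.inl (plex_cons_cons.mpr (Or.inl h))
      · rcases ih t with h | rfl | h
        · exact Or.inl (plex_cons_cons.mpr (Or.inr ⟨rfl, h⟩))
        · exact Or.inr (Or.inl rfl)
        · exact Or.inr (Or.inr (plex_cons_cons.mpr (Or.inr ⟨rfl, h⟩)))
      · exact Or.inr (Or.inr (plex_cons_cons.mpr (Or.inl h)))

theorem plex_append_left_iff (p : List X) {a b : List X} :
    PLex (p ++ a) (p ++ b) ↔ PLex a b := by
  induction p with
  | nil => simp
  | cons x r ih => simp [plex_cons_cons, ih]

theorem plex_append_right_of_length_eq {a c : List X} (b : List X)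
    (hlen : a.length = c.length) (h : PLex a c) : PLex (a ++ b) (c ++ b) := by
  induction a generalizing c with
  | nil =>
    match c with
    | [] => exact absurd h (plex_irrefl [])
    | y :: t => simp at hlen
  | cons x s ih =>
    match c with
    | [] => simp at hlen
    | y :: t =>
      simp only [List.length_cons, Nat.succ.injEq] at hlen
      rw [plex_cons_cons] at h
      rcases h with h | ⟨rfl, h⟩
      · exact plex_cons_cons.mpr (Or.inl h)
      · exact plex_cons_cons.mpr (Or.inr ⟨rfl, ih hlen h⟩)

theorem plex_append_elim {w : List X} (v : List X) :
    ∀ c : List X, PLex (w ++ v) c → PLex w c ∨ w <+: c := by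
  induction w with
  | nil => intro c _; exact Or.inr (List.nil_prefix)
  | cons x s ih =>
    intro c h
    match c with
    | [] => exact Or.inl (plex_nil_right (by simp))
    | y :: t =>
      rw [List.cons_append, plex_cons_cons] at h
      rcases h with h | ⟨rfl, h⟩
      · exact Or.inl (plex_cons_cons.mpr (Or.inl h))
      · rcases ih t h with h' | h'
        · exact Or.inl (plex_cons_cons.mpr (Or.inr ⟨rfl, h'⟩))
        · exact Or.inr (List.cons_prefix_cons.mpr ⟨rfl, h'⟩)

/-- If `a < v` and `v` is not a prefix of `a`, then `a < v ++ b`. -/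
theorem plex_append_of_plex {a v : List X} (b : List X) (h : PLex a v) (hp : ¬ v <+: a) :
    PLex a (v ++ b) := by
  induction v generalizing a with
  | nil => exact absurd List.nil_prefix hp
  | cons y t ih =>
    match a with
    | [] => exact absurd h (not_plex_nil_left _)
    | x :: s =>
      rw [plex_cons_cons] at h
      rcases h with h | ⟨rfl, h⟩
      · exact plex_cons_cons.mpr (Or.inl h)
      · have hp' : ¬ t <+: s := fun hq => hp (List.cons_prefix_cons.mpr ⟨rfl, hq⟩)
        exact plex_cons_cons.mpr (Or.inr ⟨rfl, ih h hp'⟩)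

/-- If `a < c` and `c` is not a prefix of `a`, then `a ++ b < c`. -/
theorem plex_append_of_plex' {a c : List X} (b : List X) (h : PLex a c) (hp : ¬ c <+: a) :
    PLex (a ++ b) c := by
  induction c generalizing a with
  | nil => exact absurd List.nil_prefix hp
  | cons y t ih =>
    match a with
    | [] => exact absurd h (not_plex_nil_left _)
    | x :: s =>
      rw [plex_cons_cons] at h
      rcases h with h | ⟨rfl, h⟩
      · exact plex_cons_cons.mpr (Or.inl h)
      · have hp' : ¬ t <+: s := fun hq => hp (List.cons_prefix_cons.mpr ⟨rfl, hq⟩)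
        exact plex_cons_cons.mpr (Or.inr ⟨rfl, ih h hp'⟩)

/-- If `a < v ++ b` and `v` is not a prefix of `a`, then `a < v`. -/
theorem plex_of_plex_append {a v b : List X} (h : PLex a (v ++ b)) (hp : ¬ v <+: a) :
    PLex a v := by
  induction v generalizing a with
  | nil => exact absurd List.nil_prefix hp
  | cons y t ih =>
    match a with
    | [] => exact absurd h (not_plex_nil_left _)
    | x :: s =>
      rw [List.cons_append, plex_cons_cons] at h
      rcases h with h | ⟨rfl, h⟩
      · exact plex_cons_cons.mpr (Or.inl h)
      · have hp' : ¬ t <+: s := fun hq => hp (List.cons_prefix_cons.mpr ⟨rfl, hq⟩)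
        exact plex_cons_cons.mpr (Or.inr ⟨rfl, ih h hp'⟩)

/-- Key recursion for (3) → (2): if every factorization `u = v' ++ w'` has `w' < v'`,
`v` is nonempty, and `u = p ++ a` with `v <+: p`, then `a < v ++ a`. -/
theorem plex_aux {u v : List X} (hv : v ≠ [])
    (h3 : ∀ v' w : List X, u = v' ++ w → v' ≠ [] → w ≠ [] → PLex w v') :
    ∀ n (a : List X), a.length ≤ n → a ≠ [] → ∀ p : List X, v <+: p → u = p ++ a →
      PLex a (v ++ a) := by
  intro n
  induction n with
  | zero =>
    intro a ha hne
    interval_cases h : a.length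
    · exact absurd (List.length_eq_zero_iff.mp h) hne
  | succ n ih =>
    intro a ha hne p hvp hu
    have hp : p ≠ [] := by
      rintro rfl
      exact hv (List.prefix_nil.mp hvp)
    have hap : PLex a p := h3 p a hu hp hne
    by_cases hva : v <+: a
    · obtain ⟨z, rfl⟩ := hva
      rcases eq_or_ne z [] with rfl | hz
      · rw [List.append_nil] at hap hu
        rcases eq_or_ne v p with rfl | hne'
        · exact absurd hap (plex_irrefl v)
        · exact absurd (plex_of_prefix hvp hne') (fun h => plex_asymm hap h)
      · have hlen : z.length ≤ n := by
          have := List.length_pos_iff.mpr hv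
          have h2 : (v ++ z).length ≤ n + 1 := ha
          simp only [List.length_append] at h2
          omega
        have hz2 : PLex z (v ++ z) := by
          refine ih z hlen hz (p ++ v) (hvp.trans (List.prefix_append p v)) ?_
          rw [hu, List.append_assoc]
        exact (plex_append_left_iff v).mpr hz2
    · obtain ⟨q, rfl⟩ := hvp
      exact plex_append_of_plex a (plex_of_plex_append hap hva) hva

theorem lyndon_tfae (u : List X) (hu : u ≠ []) :
    List.TFAE
      [∀ v w : List X, u = v ++ w → v ≠ [] → w ≠ [] → PLex (w ++ v) u,
       ∀ v w : List X, u = v ++ w → v ≠ [] → w ≠ [] → PLex w u,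
       ∀ v w : List X, u = v ++ w → v ≠ [] → w ≠ [] → PLex w v] := by
  tfae_have 2 → 1
  | h2 => by
    intro v w huvw hv hw
    have hwu : PLex w u := h2 v w huvw hv hw
    have hnp : ¬ u <+: w := by
      intro hp
      have h1 : u.length ≤ w.length := hp.length_le
      rw [huvw, List.length_append] at h1
      have h2 : v.length = 0 := by omega
      exact hv (List.length_eq_zero_iff.mp h2)
    exact plex_append_of_plex' v hwu hnp
  tfae_have 1 → 2
  | h1 => by
    intro v w huvw hv hw
    have h := h1 v w huvw hv hw
    rcases plex_append_elim v u h with h' | hp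
    · exact h'
    · exfalso
      obtain ⟨m, hm⟩ := hp
      have hm0 : m ≠ [] := by
        rintro rfl
        rw [List.append_nil] at hm
        rw [← hm] at huvw
        exact hv (List.self_eq_append_left.mp huvw)
      have hmu : PLex (m ++ w) u := h1 w m hm.symm hw hm0
      have hvm : PLex v m := by
        rw [← plex_append_left_iff w]
        rw [← hm] at h
        exact h
      have hlen : v.length = m.length := by
        have e1 : u.length = v.length + w.length := by rw [huvw, List.length_append]
        have e2 : u.length = w.length + m.length := by rw [← hm, List.length_append]
        omega
      have humw : PLex u (m ++ w) := by
        rw [huvw]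
        exact plex_append_right_of_length_eq w hlen hvm
      exact plex_asymm hmu humw
  tfae_have 2 → 3
  | h2 => by
    intro v w huvw hv hw
    have hwu : PLex w u := h2 v w huvw hv hw
    have hne' : w ≠ u := by
      rintro rfl
      exact hv (List.self_eq_append_left.mp huvw)
    rcases plex_trichotomy w v with h | heq | h
    · exact h
    · exfalso
      subst heq
      have hp : PLex u w := plex_of_prefix (by rw [huvw]; exact List.prefix_append w w) hne'
      exact plex_asymm hwu hp
    · exfalso
      rcases h with ⟨hpf, hne⟩ | ⟨r, s, t, x, y, hxy, he1, he2⟩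
      · -- w <+: v, so w is a proper prefix of u
        have hwp : w <+: u := hpf.trans (by rw [huvw]; exact List.prefix_append v w)
        exact plex_asymm hwu (plex_of_prefix hwp hne')
      · -- Prec v w, hence Prec u w
        have : PLex u w := Or.inr ⟨r, s ++ w, t, x, y, hxy,
          by rw [huvw, he1, List.append_assoc, List.cons_append], he2⟩
        exact plex_asymm hwu this
  tfae_have 3 → 2
  | h3 => by
    intro v w huvw hv hw
    have hwv : PLex w v := h3 v w huvw hv hw
    by_cases hvw : v <+: w
    · obtain ⟨z, rfl⟩ := hvw
      rcases eq_or_ne z [] with rfl | hz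
      · rw [List.append_nil] at hwv
        exact absurd hwv (plex_irrefl v)
      · have hz2 : PLex z (v ++ z) :=
          plex_aux hv h3 (v ++ z).length z (by
            simp [List.length_append]) hz (v ++ v) (List.prefix_append v v)
            (by rw [huvw, List.append_assoc])
        rw [huvw]
        exact (plex_append_left_iff v).mpr hz2
    · rw [huvw]
      exact plex_append_of_plex w hwv hvw
  tfae_finish
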